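/- Let n ≥ 1, let H := {(x₁,x₂) ∈ ℝ² : x₂ < 0} be the open lower half-plane, let p ∈ ℝ×{0} be a point on its boundary line, let 0 < ε < η, and let A := {x ∈ H : ε < |x − p| < η} be the open half-annulus. Let f : A → ℝⁿ be continuously differentiable and δ > 0, and suppose that for every ρ ∈ (ε, η) there exist points x_ρ, y_ρ ∈ H with |x_ρ − p| = |y_ρ − p| = ρ and ‖f(x_ρ) − f(y_ρ)‖ ≥ δ. Then ∬_A ‖Df(x)‖² dx ≥ (δ²/π) · log(η/ε). In particular, if f is continuously differentiable on {x ∈ H : 0 < |x − p| < η} and the oscillation hypothesis holds for every ρ ∈ (0, η), then the Dirichlet energy of f on that punctured half-disk is infinite. -/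

import Mathlib

open MeasureTheory

/-- Euclidean distance from `x` to `p` in the plane `ℝ × ℝ`. -/
noncomputable def rad (p x : ℝ × ℝ) : ℝ :=
  Real.sqrt ((x.1 - p.1) ^ 2 + (x.2 - p.2) ^ 2)

open Real Set intervalIntegral

private lemma cl_two_cs (a b x y : ℝ) (hx : 0 ≤ x) (hy : 0 ≤ y) :
    (|a| * x + |b| * y) ^ 2 ≤ (a ^ 2 + b ^ 2) * (x ^ 2 + y ^ 2) := by
  have h1 : |a| ^ 2 = a ^ 2 := sq_abs a
  have h2 : |b| ^ 2 = b ^ 2 := sq_abs b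
  nlinarith [sq_nonneg (|a| * y - |b| * x), abs_nonneg a, abs_nonneg b]

private lemma cl_ofReal_all_le {x : ENNReal} (h : ∀ r : ℝ, ENNReal.ofReal r ≤ x) : x = ⊤ := by
  by_contra hx
  have h1 := h (x.toReal + 1)
  have h2 : x ≤ ENNReal.ofReal x.toReal := le_of_eq (ENNReal.ofReal_toReal hx).symm
  have h3 : ENNReal.ofReal x.toReal < ENNReal.ofReal (x.toReal + 1) :=
    (ENNReal.ofReal_lt_ofReal_iff (by positivity)).2 (by linarith)
  exact absurd (h1.trans h2) (not_le.2 h3)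

private lemma cl_vec_bound {n : ℕ} (D : ℝ × ℝ →L[ℝ] EuclideanSpace ℝ (Fin n)) (a b : ℝ) :
    ‖D (a, b)‖ ^ 2 ≤ (a ^ 2 + b ^ 2) * (‖D ((1:ℝ), (0:ℝ))‖ ^ 2 + ‖D ((0:ℝ), (1:ℝ))‖ ^ 2) := by
  have hD : D (a, b) = a • D ((1:ℝ), (0:ℝ)) + b • D ((0:ℝ), (1:ℝ)) := by
    have hab : ((a, b) : ℝ × ℝ) = a • ((1:ℝ), (0:ℝ)) + b • ((0:ℝ), (1:ℝ)) := by
      simp [Prod.ext_iff]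
    rw [hab, map_add, ContinuousLinearMap.map_smul, ContinuousLinearMap.map_smul]
  have h1 : ‖D (a, b)‖ ≤ |a| * ‖D ((1:ℝ), (0:ℝ))‖ + |b| * ‖D ((0:ℝ), (1:ℝ))‖ := by
    rw [hD]
    refine (norm_add_le _ _).trans ?_
    rw [norm_smul, norm_smul, Real.norm_eq_abs, Real.norm_eq_abs]
  calc ‖D (a, b)‖ ^ 2 ≤ (|a| * ‖D ((1:ℝ), (0:ℝ))‖ + |b| * ‖D ((0:ℝ), (1:ℝ))‖) ^ 2 :=
        pow_le_pow_left₀ (norm_nonneg _) h1 2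
    _ ≤ _ := cl_two_cs a b _ _ (norm_nonneg _) (norm_nonneg _)

private lemma cl_amgm (u c : ℝ) (hc : 0 < c) : u ≤ (c * u ^ 2 + 1 / c) / 2 := by
  rw [le_div_iff₀ (by norm_num : (0:ℝ) < 2), ← sub_nonneg]
  have h : c * u ^ 2 + 1 / c - u * 2 = (c * u - 1) ^ 2 / c := by
    field_simp
    ring
  rw [h]
  positivity

set_option maxHeartbeats 1000000 in
private lemma cl_key {n : ℕ} (p : ℝ × ℝ) (hp : p.2 = 0)
    (ε η δ : ℝ) (hε : 0 < ε) (hεη : ε < η) (hδ : 0 < δ)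
    (f : ℝ × ℝ → EuclideanSpace ℝ (Fin n))
    (hf : ContDiffOn ℝ 1 f {x : ℝ × ℝ | x.2 < 0 ∧ ε < rad p x ∧ rad p x < η})
    (hosc : ∀ ρ : ℝ, ε < ρ → ρ < η → ∃ x y : ℝ × ℝ,
      x.2 < 0 ∧ y.2 < 0 ∧ rad p x = ρ ∧ rad p y = ρ ∧ δ ≤ ‖f x - f y‖) :
    ENNReal.ofReal (δ ^ 2 / Real.pi * Real.log (η / ε)) ≤
      ∫⁻ x in {x : ℝ × ℝ | x.2 < 0 ∧ ε < rad p x ∧ rad p x < η},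
        ENNReal.ofReal (‖fderiv ℝ f x ((1:ℝ), (0:ℝ))‖ ^ 2 + ‖fderiv ℝ f x ((0:ℝ), (1:ℝ))‖ ^ 2) := by
  have hπ : (0:ℝ) < π := Real.pi_pos
  set A : Set (ℝ × ℝ) := {x : ℝ × ℝ | x.2 < 0 ∧ ε < rad p x ∧ rad p x < η} with hA
  set G : ℝ × ℝ → ℝ := fun x =>
    ‖fderiv ℝ f x ((1:ℝ), (0:ℝ))‖ ^ 2 + ‖fderiv ℝ f x ((0:ℝ), (1:ℝ))‖ ^ 2 with hG
  have hG0 : ∀ x, 0 ≤ G x := fun x => by positivity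
  have hradc : Continuous (rad p) := by
    apply Continuous.sqrt
    exact ((continuous_fst.sub continuous_const).pow 2).add
      ((continuous_snd.sub continuous_const).pow 2)
  have hA_open : IsOpen A := by
    have : A = {x : ℝ × ℝ | x.2 < 0} ∩ (rad p) ⁻¹' (Ioo ε η) := by
      ext x; simp [hA, Set.mem_setOf_eq, and_assoc]
    rw [this]
    exact (isOpen_lt continuous_snd continuous_const).inter (isOpen_Ioo.preimage hradc)
  have hfd : ∀ x ∈ A, HasFDerivAt f (fderiv ℝ f x) x := fun x hx =>
    ((hf.differentiableOn one_ne_zero x hx).differentiableAt (hA_open.mem_nhds hx)).hasFDerivAt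
  have hfc : ContinuousOn (fderiv ℝ f) A := by
    have := hf.continuousOn_fderivWithin (hA_open.uniqueDiffOn) le_rfl
    refine this.congr fun x hx => ?_
    exact (((hf.differentiableOn one_ne_zero x hx).differentiableAt
      (hA_open.mem_nhds hx)).fderivWithin (hA_open.uniqueDiffOn x hx)).symm
  have hGc : ContinuousOn G A := by
    exact ((hfc.clm_apply continuousOn_const).norm.pow 2).add
      ((hfc.clm_apply continuousOn_const).norm.pow 2)
  -- the polar parametrization around p
  set Φ : ℝ × ℝ → ℝ × ℝ := fun q => p + polarCoord.symm q with hΦ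
  have hΦ_eq : ∀ q : ℝ × ℝ, Φ q = (p.1 + q.1 * Real.cos q.2, p.2 + q.1 * Real.sin q.2) := by
    intro q; simp [hΦ, Prod.ext_iff]
  have hΦc : Continuous Φ := by
    have : Φ = fun q : ℝ × ℝ => (p.1 + q.1 * Real.cos q.2, p.2 + q.1 * Real.sin q.2) :=
      funext hΦ_eq
    rw [this]
    fun_prop
  set s : Set (ℝ × ℝ) := Ioo ε η ×ˢ Ioo (-π) 0 with hs_def
  have hs : MeasurableSet s := measurableSet_Ioo.prod measurableSet_Ioo
  have hsub : s ⊆ polarCoord.target := by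
    rintro ⟨r, θ⟩ ⟨hr, hθ⟩
    refine ⟨hε.trans hr.1, hθ.1, hθ.2.trans hπ⟩
  have himg : Φ '' s = A := by
    ext x
    constructor
    · rintro ⟨⟨r, θ⟩, ⟨hr, hθ⟩, rfl⟩
      have hr0 : 0 < r := hε.trans hr.1
      have hsin : Real.sin θ < 0 := Real.sin_neg_of_neg_of_neg_pi_lt hθ.2 hθ.1
      have hx2 : (Φ (r, θ)).2 < 0 := by
        rw [hΦ_eq, hp]
        simpa using mul_neg_of_pos_of_neg hr0 hsin
      have hrad : rad p (Φ (r, θ)) = r := by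
        rw [hΦ_eq]
        simp only [rad]
        have : (p.1 + r * Real.cos θ - p.1) ^ 2 + (p.2 + r * Real.sin θ - p.2) ^ 2 = r ^ 2 := by
          have := Real.sin_sq_add_cos_sq θ
          ring_nf
          nlinarith [Real.sin_sq_add_cos_sq θ]
        rw [this, Real.sqrt_sq hr0.le]
      exact ⟨hx2, by rw [hrad]; exact hr.1, by rw [hrad]; exact hr.2⟩
    · rintro ⟨hx2, hr1, hr2⟩
      set q0 : ℝ × ℝ := x - p with hq0
      have hq02 : q0.2 < 0 := by simp [hq0, hp, hx2]
      have hq0src : q0 ∈ polarCoord.source := by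
        rw [polarCoord_source]
        exact Or.inr (ne_of_lt hq02)
      have hfst : (polarCoord q0).1 = rad p x := by
        simp [polarCoord, rad, hq0]
      have hsnd : (polarCoord q0).2 ∈ Ioo (-π) (0:ℝ) := by
        refine ⟨Complex.neg_pi_lt_arg _, ?_⟩
        rw [polarCoord]
        exact Complex.arg_neg_iff.2 (by simpa using hq02)
      refine ⟨polarCoord q0, ?_, ?_⟩
      · constructor
        · rw [hfst]; exact ⟨hr1, hr2⟩
        · exact hsnd
      · show p + polarCoord.symm (polarCoord q0) = x
        rw [polarCoord.left_inv hq0src, hq0]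
        abel
  have hmaps : Set.MapsTo Φ s A := fun q hq => himg ▸ Set.mem_image_of_mem Φ hq
  -- derivative data for the change of variables
  set B : ℝ × ℝ → ℝ × ℝ →L[ℝ] ℝ × ℝ := fun q =>
    LinearMap.toContinuousLinearMap (Matrix.toLin (Module.Basis.finTwoProd ℝ) (Module.Basis.finTwoProd ℝ)
      !![Real.cos q.2, -q.1 * Real.sin q.2; Real.sin q.2, q.1 * Real.cos q.2]) with hB
  have hΦ' : ∀ q ∈ s, HasFDerivWithinAt Φ (B q) s q := fun q _ =>
    ((hasFDerivAt_polarCoord_symm q).const_add p).hasFDerivWithinAt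
  have hBdet : ∀ q : ℝ × ℝ, (B q).det = q.1 := by
    intro q
    conv_rhs => rw [← one_mul q.1, ← Real.cos_sq_add_sin_sq q.2]
    simp only [hB, neg_mul, LinearMap.det_toContinuousLinearMap, LinearMap.det_toLin,
      Matrix.det_fin_two_of, sub_neg_eq_add]
    ring
  have hinj : Set.InjOn Φ s := by
    intro a ha b hb hab
    have h2 : Set.InjOn polarCoord.symm polarCoord.target :=
      polarCoord.symm_source ▸ polarCoord.symm.injOn
    exact h2 (hsub ha) (hsub hb) (by simpa [hΦ] using hab)
  -- the inner (circle) estimate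
  have inner_est : ∀ ρ ∈ Ioo ε η,
      ENNReal.ofReal (δ ^ 2 / (π * ρ)) ≤
        ∫⁻ θ in Ioo (-π) 0, ENNReal.ofReal (ρ * G (Φ (ρ, θ))) := by
    intro ρ hρ
    have hρ0 : 0 < ρ := hε.trans hρ.1
    -- the curve and its derivative
    set h : ℝ → EuclideanSpace ℝ (Fin n) := fun θ => f (Φ (ρ, θ)) with hh
    set h' : ℝ → EuclideanSpace ℝ (Fin n) := fun θ =>
      fderiv ℝ f (Φ (ρ, θ)) (ρ * -Real.sin θ, ρ * Real.cos θ) with hh'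
    have hmem : ∀ θ ∈ Ioo (-π) (0:ℝ), Φ (ρ, θ) ∈ A := fun θ hθ =>
      hmaps (Set.mk_mem_prod hρ hθ)
    have hder : ∀ θ ∈ Ioo (-π) (0:ℝ), HasDerivAt h (h' θ) θ := by
      intro θ hθ
      have hc : HasDerivAt (fun t : ℝ => Φ (ρ, t)) (ρ * -Real.sin θ, ρ * Real.cos θ) θ := by
        have h1 : HasDerivAt (fun t : ℝ => p.1 + ρ * Real.cos t) (ρ * -Real.sin θ) θ :=
          ((Real.hasDerivAt_cos θ).const_mul ρ).const_add p.1
        have h2 : HasDerivAt (fun t : ℝ => p.2 + ρ * Real.sin t) (ρ * Real.cos θ) θ :=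
          ((Real.hasDerivAt_sin θ).const_mul ρ).const_add p.2
        have heq : (fun t : ℝ => Φ (ρ, t)) =
            fun t : ℝ => (p.1 + ρ * Real.cos t, p.2 + ρ * Real.sin t) :=
          funext fun t => hΦ_eq (ρ, t)
        rw [heq]
        exact h1.prodMk h2
      exact (hfd _ (hmem θ hθ)).comp_hasDerivAt θ hc
    have hCont : ContinuousOn h' (Ioo (-π) 0) := by
      have hc1 : ContinuousOn (fun θ : ℝ => fderiv ℝ f (Φ (ρ, θ))) (Ioo (-π) 0) :=
        hfc.comp (hΦc.comp (continuous_const.prodMk continuous_id)).continuousOn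
          fun θ hθ => hmem θ hθ
      exact hc1.clm_apply
        ((continuous_const.mul Real.continuous_sin.neg).prodMk
          (continuous_const.mul Real.continuous_cos)).continuousOn
    -- main estimate, given two angles
    have main : ∀ θ₁ θ₂, θ₁ ∈ Ioo (-π) (0:ℝ) → θ₂ ∈ Ioo (-π) (0:ℝ) → θ₁ ≤ θ₂ →
        δ ≤ ‖h θ₂ - h θ₁‖ →
        ENNReal.ofReal (δ ^ 2 / (π * ρ)) ≤
          ∫⁻ θ in Ioo (-π) 0, ENNReal.ofReal (ρ * G (Φ (ρ, θ))) := by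
      intro θ₁ θ₂ hθ₁ hθ₂ hle hosc'
      have hIcc : Icc θ₁ θ₂ ⊆ Ioo (-π) (0:ℝ) := fun t ht =>
        ⟨lt_of_lt_of_le hθ₁.1 ht.1, lt_of_le_of_lt ht.2 hθ₂.2⟩
      have huIcc : uIcc θ₁ θ₂ ⊆ Ioo (-π) (0:ℝ) := by
        rw [uIcc_of_le hle]; exact hIcc
      have hContu : ContinuousOn h' (uIcc θ₁ θ₂) := hCont.mono huIcc
      have hFTC : ∫ t in θ₁..θ₂, h' t = h θ₂ - h θ₁ :=
        intervalIntegral.integral_eq_sub_of_hasDerivAt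
          (fun t ht => hder t (huIcc ht)) (hContu.intervalIntegrable)
      have hδ1 : δ ≤ ∫ t in θ₁..θ₂, ‖h' t‖ := by
        refine hosc'.trans ?_
        rw [← hFTC]
        exact intervalIntegral.norm_integral_le_integral_norm hle
      set I2 : ℝ := ∫ t in θ₁..θ₂, ‖h' t‖ ^ 2 with hI2def
      have hint_n : IntervalIntegrable (fun t => ‖h' t‖) volume θ₁ θ₂ :=
        hContu.norm.intervalIntegrable
      have hint_sq : IntervalIntegrable (fun t => ‖h' t‖ ^ 2) volume θ₁ θ₂ :=
        (hContu.norm.pow 2).intervalIntegrable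
      have hptwise : ∀ t ∈ Icc θ₁ θ₂,
          ‖h' t‖ ≤ (π / δ * ‖h' t‖ ^ 2 + δ / π) / 2 := by
        intro t _
        have hc : 0 < π / δ := by positivity
        have := cl_amgm (‖h' t‖) (π / δ) hc
        rwa [one_div_div] at this
      have hmono : (∫ t in θ₁..θ₂, ‖h' t‖) ≤
          ∫ t in θ₁..θ₂, (π / δ * ‖h' t‖ ^ 2 + δ / π) / 2 := by
        refine intervalIntegral.integral_mono_on hle hint_n ?_ hptwise
        exact (((hint_sq.const_mul _).add (intervalIntegrable_const)).div_const 2)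
      have hval : (∫ t in θ₁..θ₂, (π / δ * ‖h' t‖ ^ 2 + δ / π) / 2) =
          (π / δ * I2 + δ / π * (θ₂ - θ₁)) / 2 := by
        rw [intervalIntegral.integral_div]
        congr 1
        rw [intervalIntegral.integral_add (hint_sq.const_mul _) intervalIntegrable_const,
          intervalIntegral.integral_const_mul, intervalIntegral.integral_const, smul_eq_mul,
          mul_comm (θ₂ - θ₁)]
      have hL : θ₂ - θ₁ ≤ π := by
        have := hθ₁.1; have := hθ₂.2; linarith
      have hI2 : δ ^ 2 / π ≤ I2 := by
        have h1 : δ ≤ (π / δ * I2 + δ / π * (θ₂ - θ₁)) / 2 := by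
          rw [← hval]; exact hδ1.trans hmono
        have h2 : δ / π * (θ₂ - θ₁) ≤ δ := by
          have : δ / π * (θ₂ - θ₁) ≤ δ / π * π := by
            apply mul_le_mul_of_nonneg_left hL (by positivity)
          rwa [div_mul_cancel₀ δ hπ.ne'] at this
        have h3 : δ ≤ π / δ * I2 := by linarith
        rw [div_le_iff₀ hπ]
        have hid : δ * (π / δ * I2) = I2 * π := by
          field_simp
        calc δ ^ 2 = δ * δ := sq δ
          _ ≤ δ * (π / δ * I2) := mul_le_mul_of_nonneg_left h3 hδ.le
          _ = I2 * π := hid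
      -- compare with ρ² G
      have hpt2 : ∀ t ∈ Icc θ₁ θ₂, ‖h' t‖ ^ 2 ≤ ρ * (ρ * G (Φ (ρ, t))) := by
        intro t _
        have := cl_vec_bound (fderiv ℝ f (Φ (ρ, t))) (ρ * -Real.sin t) (ρ * Real.cos t)
        have hab : (ρ * -Real.sin t) ^ 2 + (ρ * Real.cos t) ^ 2 = ρ ^ 2 := by
          nlinarith [Real.sin_sq_add_cos_sq t]
        calc ‖h' t‖ ^ 2 ≤ ((ρ * -Real.sin t) ^ 2 + (ρ * Real.cos t) ^ 2) * G (Φ (ρ, t)) := this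
          _ = ρ * (ρ * G (Φ (ρ, t))) := by rw [hab]; ring
      have hGcont : ContinuousOn (fun t => ρ * G (Φ (ρ, t))) (Icc θ₁ θ₂) := by
        refine continuousOn_const.mul ?_
        exact (hGc.comp (hΦc.comp (continuous_const.prodMk continuous_id)).continuousOn
          fun t ht => hmem t (hIcc ht)).mono (by intro t ht; exact ht)
      have hint_G : IntervalIntegrable (fun t => ρ * (ρ * G (Φ (ρ, t)))) volume θ₁ θ₂ :=
        ((hGcont.const_smul ρ).mono (uIcc_of_le hle).subset).intervalIntegrable
      have hI2le : I2 ≤ ∫ t in θ₁..θ₂, ρ * (ρ * G (Φ (ρ, t))) :=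
        intervalIntegral.integral_mono_on hle hint_sq hint_G hpt2
      have hJ : δ ^ 2 / (π * ρ) ≤ ∫ t in θ₁..θ₂, ρ * G (Φ (ρ, t)) := by
        have h4 : (∫ t in θ₁..θ₂, ρ * (ρ * G (Φ (ρ, t)))) =
            ρ * ∫ t in θ₁..θ₂, ρ * G (Φ (ρ, t)) := intervalIntegral.integral_const_mul _ _
        have h5 : δ ^ 2 / π ≤ ρ * ∫ t in θ₁..θ₂, ρ * G (Φ (ρ, t)) := by
          rw [← h4]; exact hI2.trans hI2le
        rw [div_le_iff₀ (by positivity : (0:ℝ) < π * ρ)]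
        rw [div_le_iff₀ hπ] at h5
        calc δ ^ 2 ≤ ρ * (∫ t in θ₁..θ₂, ρ * G (Φ (ρ, t))) * π := h5
          _ = (∫ t in θ₁..θ₂, ρ * G (Φ (ρ, t))) * (π * ρ) := by ring
      -- pass to the lower Lebesgue integral
      have hintOn : IntegrableOn (fun t => ρ * G (Φ (ρ, t))) (Ioc θ₁ θ₂) volume :=
        (hGcont.integrableOn_Icc).mono_set Ioc_subset_Icc_self
      have hnn : 0 ≤ᵐ[volume.restrict (Ioc θ₁ θ₂)] fun t => ρ * G (Φ (ρ, t)) :=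
        Filter.Eventually.of_forall fun t => by positivity
      calc ENNReal.ofReal (δ ^ 2 / (π * ρ))
            ≤ ENNReal.ofReal (∫ t in Ioc θ₁ θ₂, ρ * G (Φ (ρ, t))) := by
              apply ENNReal.ofReal_le_ofReal
              rwa [← intervalIntegral.integral_of_le hle]
        _ ≤ ∫⁻ t in Ioc θ₁ θ₂, ENNReal.ofReal (ρ * G (Φ (ρ, t))) :=
              le_of_eq (MeasureTheory.ofReal_integral_eq_lintegral_ofReal hintOn hnn)
        _ ≤ ∫⁻ t in Ioo (-π) 0, ENNReal.ofReal (ρ * G (Φ (ρ, t))) :=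
              lintegral_mono_set (Ioc_subset_Icc_self.trans hIcc)
    -- get the two points on the circle
    obtain ⟨x, y, hx2, hy2, hxr, hyr, hxy⟩ := hosc ρ hρ.1 hρ.2
    have getθ : ∀ z : ℝ × ℝ, z.2 < 0 → rad p z = ρ →
        ∃ θ ∈ Ioo (-π) (0:ℝ), Φ (ρ, θ) = z := by
      intro z hz2 hzr
      set q0 : ℝ × ℝ := z - p with hq0
      have hq02 : q0.2 < 0 := by simp [hq0, hp, hz2]
      have hq0src : q0 ∈ polarCoord.source := by
        rw [polarCoord_source]; exact Or.inr (ne_of_lt hq02)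
      have hfst : (polarCoord q0).1 = ρ := by
        rw [← hzr]; simp [polarCoord, rad, hq0]
      refine ⟨(polarCoord q0).2, ⟨Complex.neg_pi_lt_arg _, ?_⟩, ?_⟩
      · rw [polarCoord]
        exact Complex.arg_neg_iff.2 (by simpa using hq02)
      · have : (ρ, (polarCoord q0).2) = polarCoord q0 := by
          rw [← hfst]
        show p + polarCoord.symm (ρ, (polarCoord q0).2) = z
        rw [this, polarCoord.left_inv hq0src, hq0]
        abel
    obtain ⟨θx, hθx, hΦx⟩ := getθ x hx2 hxr
    obtain ⟨θy, hθy, hΦy⟩ := getθ y hy2 hyr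
    rcases le_total θx θy with hc | hc
    · refine main θx θy hθx hθy hc ?_
      rw [hh]; simp only [hΦx, hΦy]
      rwa [norm_sub_rev]
    · refine main θy θx hθy hθx hc ?_
      rw [hh]; simp only [hΦx, hΦy]
      exact hxy
  -- outer integral computation
  have outer : ENNReal.ofReal (δ ^ 2 / π * Real.log (η / ε)) ≤
      ∫⁻ ρ in Ioo ε η, ENNReal.ofReal (δ ^ 2 / (π * ρ)) := by
    have hcont : ContinuousOn (fun ρ : ℝ => δ ^ 2 / (π * ρ)) (Icc ε η) := by
      apply ContinuousOn.div continuousOn_const (continuousOn_const.mul continuousOn_id)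
      intro ρ hρ
      have : 0 < ρ := lt_of_lt_of_le hε hρ.1
      exact mul_ne_zero hπ.ne' this.ne'
    have hintOn : IntegrableOn (fun ρ : ℝ => δ ^ 2 / (π * ρ)) (Ioc ε η) volume :=
      hcont.integrableOn_Icc.mono_set Ioc_subset_Icc_self
    have hval : (∫ ρ in ε..η, δ ^ 2 / (π * ρ)) = δ ^ 2 / π * Real.log (η / ε) := by
      have : ∀ ρ : ℝ, δ ^ 2 / (π * ρ) = δ ^ 2 / π * (1 / ρ) := by
        intro ρ; field_simp
      simp_rw [this]
      rw [intervalIntegral.integral_const_mul, integral_one_div]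
      intro h0
      rw [uIcc_of_le hεη.le] at h0
      exact absurd h0.1 (not_le.2 hε)
    have hnn : 0 ≤ᵐ[volume.restrict (Ioc ε η)] fun ρ : ℝ => δ ^ 2 / (π * ρ) := by
      refine (ae_restrict_iff' measurableSet_Ioc).2 (Filter.Eventually.of_forall fun ρ hρ => ?_)
      have : 0 < ρ := hε.trans hρ.1
      positivity
    calc ENNReal.ofReal (δ ^ 2 / π * Real.log (η / ε))
          = ENNReal.ofReal (∫ ρ in Ioc ε η, δ ^ 2 / (π * ρ)) := by
            rw [← intervalIntegral.integral_of_le hεη.le, hval]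
      _ ≤ ∫⁻ ρ in Ioc ε η, ENNReal.ofReal (δ ^ 2 / (π * ρ)) :=
            le_of_eq (MeasureTheory.ofReal_integral_eq_lintegral_ofReal hintOn hnn)
      _ = ∫⁻ ρ in Ioo ε η, ENNReal.ofReal (δ ^ 2 / (π * ρ)) :=
            (setLIntegral_congr Ioo_ae_eq_Ioc).symm
  -- Tonelli / change of variables
  have hmeq : (volume : Measure (ℝ × ℝ)).restrict s =
      ((volume : Measure ℝ).restrict (Ioo ε η)).prod
        ((volume : Measure ℝ).restrict (Ioo (-π) 0)) := by
    rw [Measure.prod_restrict, ← hs_def, ← Measure.volume_eq_prod]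
  have hFc : ContinuousOn (fun q : ℝ × ℝ => ENNReal.ofReal (q.1 * G (Φ q))) s :=
    ENNReal.continuous_ofReal.comp_continuousOn
      (continuousOn_fst.mul (hGc.comp hΦc.continuousOn hmaps))
  have hFm : AEMeasurable (fun q : ℝ × ℝ => ENNReal.ofReal (q.1 * G (Φ q)))
      (((volume : Measure ℝ).restrict (Ioo ε η)).prod
        ((volume : Measure ℝ).restrict (Ioo (-π) 0))) := by
    rw [← hmeq]; exact hFc.aemeasurable hs
  have hTonelli : ∫⁻ q in s, ENNReal.ofReal (q.1 * G (Φ q)) =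
      ∫⁻ ρ in Ioo ε η, ∫⁻ θ in Ioo (-π) 0, ENNReal.ofReal ((ρ, θ).1 * G (Φ (ρ, θ))) := by
    rw [hmeq]
    exact MeasureTheory.lintegral_prod _ hFm
  calc ENNReal.ofReal (δ ^ 2 / π * Real.log (η / ε))
        ≤ ∫⁻ ρ in Ioo ε η, ENNReal.ofReal (δ ^ 2 / (π * ρ)) := outer
    _ ≤ ∫⁻ ρ in Ioo ε η, ∫⁻ θ in Ioo (-π) 0, ENNReal.ofReal ((ρ, θ).1 * G (Φ (ρ, θ))) := by
        refine lintegral_mono_ae ((ae_restrict_iff' measurableSet_Ioo).2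
          (Filter.Eventually.of_forall fun ρ hρ => ?_))
        simpa using inner_est ρ hρ
    _ = ∫⁻ q in s, ENNReal.ofReal (q.1 * G (Φ q)) := hTonelli.symm
    _ = ∫⁻ q in s, ENNReal.ofReal |(B q).det| * ENNReal.ofReal (G (Φ q)) := by
        refine setLIntegral_congr_fun hs (fun q hq => ?_)
        have hq1 : 0 < q.1 := hε.trans hq.1.1
        rw [hBdet, abs_of_pos hq1, ENNReal.ofReal_mul hq1.le]
    _ = ∫⁻ x in Φ '' s, ENNReal.ofReal (G x) :=
        (lintegral_image_eq_lintegral_abs_det_fderiv_mul volume hs hΦ' hinj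
          (fun x => ENNReal.ofReal (G x))).symm
    _ = _ := by rw [himg]

/-- Courant–Lebesgue lower bound: if `f` is `C¹` on the open lower half-annulus
`A = {x₂ < 0, ε < |x − p| < η}` (with `p` on the boundary line) and on every half-circle of
radius `ρ ∈ (ε,η)` the values of `f` oscillate by at least `δ`, then
`∬_A ‖Df‖² ≥ (δ²/π) log(η/ε)`. In particular, if the oscillation hypothesis holds on all of
`(0,η)` for a `C¹` map on the punctured half-disk, the Dirichlet energy there is infinite. -/
theorem statement16 {n : ℕ} (hn : 1 ≤ n) (p : ℝ × ℝ) (hp : p.2 = 0)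
    (ε η δ : ℝ) (hε : 0 < ε) (hεη : ε < η) (hδ : 0 < δ)
    (f : ℝ × ℝ → EuclideanSpace ℝ (Fin n))
    (hf : ContDiffOn ℝ 1 f {x : ℝ × ℝ | x.2 < 0 ∧ ε < rad p x ∧ rad p x < η})
    (hosc : ∀ ρ : ℝ, ε < ρ → ρ < η → ∃ x y : ℝ × ℝ,
      x.2 < 0 ∧ y.2 < 0 ∧ rad p x = ρ ∧ rad p y = ρ ∧ δ ≤ ‖f x - f y‖) :
    (ENNReal.ofReal (δ ^ 2 / Real.pi * Real.log (η / ε)) ≤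
      ∫⁻ x in {x : ℝ × ℝ | x.2 < 0 ∧ ε < rad p x ∧ rad p x < η},
        ENNReal.ofReal (‖fderiv ℝ f x ((1:ℝ), (0:ℝ))‖ ^ 2 + ‖fderiv ℝ f x ((0:ℝ), (1:ℝ))‖ ^ 2)) ∧
    (∀ g : ℝ × ℝ → EuclideanSpace ℝ (Fin n),
      ContDiffOn ℝ 1 g {x : ℝ × ℝ | x.2 < 0 ∧ 0 < rad p x ∧ rad p x < η} →
      (∀ ρ : ℝ, 0 < ρ → ρ < η → ∃ x y : ℝ × ℝ,
        x.2 < 0 ∧ y.2 < 0 ∧ rad p x = ρ ∧ rad p y = ρ ∧ δ ≤ ‖g x - g y‖) →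
      ∫⁻ x in {x : ℝ × ℝ | x.2 < 0 ∧ 0 < rad p x ∧ rad p x < η},
        ENNReal.ofReal (‖fderiv ℝ g x ((1:ℝ), (0:ℝ))‖ ^ 2 + ‖fderiv ℝ g x ((0:ℝ), (1:ℝ))‖ ^ 2)
        = ⊤) := by
  have hπ : (0:ℝ) < π := Real.pi_pos
  constructor
  · exact cl_key p hp ε η δ hε hεη hδ f hf hosc
  · intro g hg hgosc
    apply cl_ofReal_all_le
    intro r
    set c : ℝ := (max r 0 + 1) * π / δ ^ 2 with hc
    have hc0 : 0 < c := by positivity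
    set ε' : ℝ := η * Real.exp (-c) with hε'
    have hη : 0 < η := hε.trans hεη
    have hε'0 : 0 < ε' := by positivity
    have hε'η : ε' < η := by
      have h1 : Real.exp (-c) < 1 := Real.exp_lt_one_iff.2 (neg_lt_zero.2 hc0)
      calc ε' = η * Real.exp (-c) := rfl
        _ < η * 1 := mul_lt_mul_of_pos_left h1 hη
        _ = η := mul_one η
    have hlog : Real.log (η / ε') = c := by
      rw [hε', show η / (η * Real.exp (-c)) = Real.exp c by
        rw [Real.exp_neg]; field_simp]
      exact Real.log_exp c
    have hval : δ ^ 2 / π * Real.log (η / ε') = max r 0 + 1 := by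
      rw [hlog, hc]
      field_simp
    have hsub : {x : ℝ × ℝ | x.2 < 0 ∧ ε' < rad p x ∧ rad p x < η} ⊆
        {x : ℝ × ℝ | x.2 < 0 ∧ 0 < rad p x ∧ rad p x < η} :=
      fun x hx => ⟨hx.1, hε'0.trans hx.2.1, hx.2.2⟩
    have hkey := cl_key p hp ε' η δ hε'0 hε'η hδ g (hg.mono hsub)
      (fun ρ h1 h2 => hgosc ρ (hε'0.trans h1) h2)
    calc ENNReal.ofReal r ≤ ENNReal.ofReal (δ ^ 2 / π * Real.log (η / ε')) := by
          apply ENNReal.ofReal_le_ofReal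
          rw [hval]
          have := le_max_left r 0
          linarith
      _ ≤ _ := hkey
      _ ≤ _ := lintegral_mono_set hsub
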